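/- Let n ≥ 1 and λ ∈ ℝ. The linear map δ₂ : h → h ⊗ h defined by δ₂(x,y,z) = λ·((x,y,0) ⊗ e_z − e_z ⊗ (x,y,0)), where e_z = (0,0,1), is a Lie-algebra 1-cocycle with respect to the adjoint action: for all u, v ∈ h one has δ₂([u,v]) = ad_u(δ₂(v)) − ad_v(δ₂(u)). -/

import Mathlib

open scoped TensorProduct BigOperators

noncomputable section

/-- The underlying space of the `(2n+1)`-dimensional Heisenberg Lie algebra
`h = ℝⁿ × ℝⁿ × ℝ`. -/
abbrev Heis (n : ℕ) : Type := (Fin n → ℝ) × (Fin n → ℝ) × ℝ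

/-- The Heisenberg Lie bracket `[(x,y,z),(x',y',z')] = (0,0,⟨x,y'⟩ − ⟨x',y⟩)`,
as a linear map in the second variable. -/
def heisBr {n : ℕ} (u : Heis n) : Heis n →ₗ[ℝ] Heis n where
  toFun v := (0, 0, (∑ i, u.1 i * v.2.1 i) - ∑ i, v.1 i * u.2.1 i)
  map_add' v w := by
    ext
    · simp
    · simp
    · simp only [Prod.fst_add, Prod.snd_add, Pi.add_apply]
      simp [mul_add, add_mul, Finset.sum_add_distrib]
      ring
  map_smul' c v := by
    ext
    · simp
    · simp
    · simp only [Prod.smul_fst, Prod.smul_snd, Pi.smul_apply, smul_eq_mul, RingHom.id_apply]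
      simp [Finset.mul_sum, mul_sub]
      ring_nf
      rw [sub_eq_neg_add]
      congr 1
      exact Finset.sum_congr rfl fun i _ => by ring

/-- The adjoint action of `u` on the tensor square `h ⊗ h`, determined by
`ad_u (a ⊗ b) = [u,a] ⊗ b + a ⊗ [u,b]`. -/
def adT {n : ℕ} (u : Heis n) :
    (Heis n ⊗[ℝ] Heis n) →ₗ[ℝ] (Heis n ⊗[ℝ] Heis n) :=
  TensorProduct.map (heisBr u) LinearMap.id + TensorProduct.map LinearMap.id (heisBr u)

/-- The central basis vector `e_z = (0,0,1)`. -/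
def ez (n : ℕ) : Heis n := (0, 0, 1)

/-- The cobracket `δ₂(x,y,z) = λ·((x,y,0) ⊗ e_z − e_z ⊗ (x,y,0))`. -/
def delta2 {n : ℕ} (lam : ℝ) (v : Heis n) : Heis n ⊗[ℝ] Heis n :=
  lam • (((v.1, v.2.1, (0:ℝ)) : Heis n) ⊗ₜ[ℝ] ez n
          - ez n ⊗ₜ[ℝ] ((v.1, v.2.1, (0:ℝ)) : Heis n))

/-- `δ₂` is a Lie-algebra 1-cocycle with respect to the adjoint action:
`δ₂([u,v]) = ad_u(δ₂(v)) − ad_v(δ₂(u))` for all `u, v` in the Heisenberg Lie algebra. -/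
theorem delta2_is_one_cocycle (n : ℕ) (hn : 1 ≤ n) (lam : ℝ) :
    ∀ u v : Heis n,
      delta2 lam (heisBr u v) = adT u (delta2 lam v) - adT v (delta2 lam u) := by
  have h1 : ∀ w : Heis n, heisBr w (ez n) = 0 := by
    intro w; ext <;> simp [heisBr, ez]
  have h2 : ∀ w a : Heis n,
      heisBr w a = ((∑ i, w.1 i * a.2.1 i) - ∑ i, a.1 i * w.2.1 i) • ez n := by
    intro w a; ext <;> simp [heisBr, ez]
  intro u v
  have hL : delta2 lam (heisBr u v) = 0 := by
    simp [delta2, heisBr, Prod.mk_zero_zero]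
  rw [hL]
  simp only [delta2, adT, LinearMap.add_apply, map_smul, map_sub,
    TensorProduct.map_tmul, LinearMap.id_coe, id_eq, h1,
    TensorProduct.tmul_zero, TensorProduct.zero_tmul]
  rw [h2 u ((v.1, v.2.1, (0:ℝ)) : Heis n), h2 v ((u.1, u.2.1, (0:ℝ)) : Heis n)]
  simp only [TensorProduct.smul_tmul, TensorProduct.tmul_smul]
  module

end
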